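/- Let N ≥ 1, B ≥ 1, D ≥ 1 and ε ∈ (0, 1/(2D)). Then there exist constants A > 0 and C > 0, depending only on N, B, D, ε, such that for every τ > 0 and all nonnegative reals X, Y, Z satisfying X ≤ N e^{N/τ} Y^{1−ε} Z^{ε}, one has e^{−A/τ} X − e^{−DA/τ} Z ≤ C e^{−B/τ} Y. -/

import Mathlib

/-- the elementary real inequality converting an interpolation inequality
with exponentially growing constant into a difference inequality with exponentially
small weights. -/
theorem young_trick (N B D ε : ℝ) (hN : 1 ≤ N) (hB : 1 ≤ B) (hD : 1 ≤ D)
    (hε0 : 0 < ε) (hε : ε < 1 / (2 * D)) :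
    ∃ A > 0, ∃ C > 0, ∀ τ > 0, ∀ X Y Z : ℝ, 0 ≤ X → 0 ≤ Y → 0 ≤ Z →
      X ≤ N * Real.exp (N / τ) * Y ^ (1 - ε) * Z ^ ε →
      Real.exp (-A / τ) * X - Real.exp (-(D * A) / τ) * Z ≤ C * Real.exp (-B / τ) * Y := by
  have hD0 : (0:ℝ) < D := lt_of_lt_of_le one_pos hD
  have hεD : ε * D < 1 / 2 := by
    have h2D : (0:ℝ) < 2 * D := by positivity
    have := (lt_div_iff₀ h2D).mp hε
    nlinarith
  have hε1 : ε < 1 := by nlinarith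
  have h1εD : (0:ℝ) < 1 - ε * D := by linarith
  have h1ε : (0:ℝ) < 1 - ε := by linarith
  set A : ℝ := (N + B * (1 - ε)) / (1 - ε * D) with hA_def
  have hA0 : 0 < A := by
    apply div_pos; nlinarith; exact h1εD
  have hAeq : A * (1 - ε * D) = N + B * (1 - ε) := by
    rw [hA_def]; exact div_mul_cancel₀ _ h1εD.ne'
  set K : ℝ := (N * ε ^ ε) ^ (1 - ε)⁻¹ with hK_def
  have hNε : (0:ℝ) < N * ε ^ ε := by positivity
  have hK0 : 0 < K := Real.rpow_pos_of_pos hNε _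
  have hKpow : K ^ (1 - ε) = N * ε ^ ε :=
    Real.rpow_inv_rpow hNε.le (by linarith)
  refine ⟨A, hA0, (1 - ε) * K, by positivity, ?_⟩
  intro τ hτ X Y Z hX hY hZ hXYZ
  have hexp : ∀ x : ℝ, (0:ℝ) < Real.exp x := Real.exp_pos
  have key : Real.exp (-A / τ) * (N * Real.exp (N / τ) * Y ^ (1 - ε) * Z ^ ε)
      = (K * Real.exp (-B / τ) * Y) ^ (1 - ε) * ((ε⁻¹ * Real.exp (-(D * A) / τ)) * Z) ^ ε := by
    rw [Real.mul_rpow (by positivity) hY, Real.mul_rpow (hK0.le) (hexp _).le,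
        Real.mul_rpow (by positivity) hZ, Real.mul_rpow (by positivity) (hexp _).le,
        hKpow, ← Real.exp_mul, ← Real.exp_mul]
    have hεε : (ε⁻¹) ^ ε * ε ^ ε = 1 := by
      rw [← Real.mul_rpow (by positivity) hε0.le, inv_mul_cancel₀ hε0.ne', Real.one_rpow]
    have hexps : Real.exp (-A / τ) * Real.exp (N / τ)
        = Real.exp (-B / τ * (1 - ε)) * Real.exp (-(D * A) / τ * ε) := by
      rw [← Real.exp_add, ← Real.exp_add]
      congr 1
      field_simp
      nlinarith [hAeq]
    calc Real.exp (-A / τ) * (N * Real.exp (N / τ) * Y ^ (1 - ε) * Z ^ ε)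
        = ((ε⁻¹) ^ ε * ε ^ ε) * N * (Real.exp (-A / τ) * Real.exp (N / τ))
            * Y ^ (1 - ε) * Z ^ ε := by rw [hεε]; ring
      _ = ((ε⁻¹) ^ ε * ε ^ ε) * N
            * (Real.exp (-B / τ * (1 - ε)) * Real.exp (-(D * A) / τ * ε))
            * Y ^ (1 - ε) * Z ^ ε := by rw [hexps]
      _ = N * ε ^ ε * Real.exp (-B / τ * (1 - ε)) * Y ^ (1 - ε)
            * ((ε⁻¹) ^ ε * Real.exp (-(D * A) / τ * ε) * Z ^ ε) := by ring
  have young : (K * Real.exp (-B / τ) * Y) ^ (1 - ε) * ((ε⁻¹ * Real.exp (-(D * A) / τ)) * Z) ^ ε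
      ≤ (1 - ε) * (K * Real.exp (-B / τ) * Y) + ε * ((ε⁻¹ * Real.exp (-(D * A) / τ)) * Z) :=
    Real.geom_mean_le_arith_mean2_weighted h1ε.le hε0.le (by positivity) (by positivity)
      (by ring)
  have step : Real.exp (-A / τ) * X
      ≤ (1 - ε) * (K * Real.exp (-B / τ) * Y) + ε * ((ε⁻¹ * Real.exp (-(D * A) / τ)) * Z) := by
    calc Real.exp (-A / τ) * X
        ≤ Real.exp (-A / τ) * (N * Real.exp (N / τ) * Y ^ (1 - ε) * Z ^ ε) :=
          mul_le_mul_of_nonneg_left hXYZ (hexp _).le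
      _ = _ := key
      _ ≤ _ := young
  have hcancel : ε * ((ε⁻¹ * Real.exp (-(D * A) / τ)) * Z) = Real.exp (-(D * A) / τ) * Z := by
    field_simp
  nlinarith [step, hcancel]
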